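/- Let G be a d-regular graph on 2N vertices admitting a unitary signing, i.e., a Hermitian matrix A with |A_{uv}| = 1 whenever uv is an edge of G, A_{uv} = 0 otherwise, and A² = d·I. Then any induced subgraph of G on a set of more than N vertices has maximum degree at least √d. -/

import Mathlib

open scoped Classical
open Matrix

-- Auxiliary: the quadratic-form / max-degree argument.
theorem aux_deg (V : Type*) [Fintype V] (d : ℕ)
    (G : SimpleGraph V)
    (A : Matrix V V ℂ)
    (hEdge : ∀ u v, G.Adj u v → ‖A u v‖ = 1)
    (hNonEdge : ∀ u v, ¬ G.Adj u v → A u v = 0)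
    (U : Finset V) (x : V → ℂ) (hx0 : x ≠ 0)
    (hsupp : ∀ v ∉ U, x v = 0)
    (heig : A *ᵥ x = (Real.sqrt d : ℂ) • x) :
    ∃ u ∈ U, Real.sqrt d ≤ (U.filter (fun v => G.Adj u v)).card := by
  classical
  by_contra hcon
  push_neg at hcon
  set s : ℝ := Real.sqrt d with hs
  set y : V → ℝ := fun v => ‖x v‖ with hy
  set T : ℝ := ∑ v, (y v) ^ 2 with hT
  have hTpos : 0 < T := by
    obtain ⟨v₀, hv₀⟩ := Function.ne_iff.mp hx0
    have hxv₀ : x v₀ ≠ 0 := by simpa using hv₀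
    have hy₀ : 0 < y v₀ := norm_pos_iff.mpr hxv₀
    have : 0 < (y v₀) ^ 2 := by positivity
    exact lt_of_lt_of_le this (Finset.single_le_sum (f := fun v => (y v)^2)
      (fun i _ => by positivity) (Finset.mem_univ v₀))
  -- LHS : s * T as real part of inner product
  have key : s * T ≤ ∑ v, ∑ u, y v * ‖A v u‖ * y u := by
    have hcz : ∀ v, (starRingEnd ℂ) (x v) * x v = (((y v) ^ 2 : ℝ) : ℂ) := by
      intro v
      have h1 : x v * (starRingEnd ℂ) (x v) = (Complex.normSq (x v) : ℂ) := Complex.mul_conj _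
      have h2 : Complex.normSq (x v) = (y v) ^ 2 := by
        rw [hy]; exact (Complex.sq_norm _).symm
      rw [mul_comm] at h1
      rw [h1, h2]
    have h1 : (∑ v, (starRingEnd ℂ) (x v) * (A *ᵥ x) v) = (s : ℂ) * (T : ℝ) := by
      rw [heig]
      have : ∀ v : V, (starRingEnd ℂ) (x v) * ((s : ℂ) • x) v
          = (s : ℂ) * (((y v) ^ 2 : ℝ) : ℂ) := by
        intro v
        simp only [Pi.smul_apply, smul_eq_mul]
        rw [show (starRingEnd ℂ) (x v) * ((s : ℂ) * x v)
            = (s : ℂ) * ((starRingEnd ℂ) (x v) * x v) by ring, hcz v]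
      rw [Finset.sum_congr rfl (fun v _ => this v), ← Finset.mul_sum]
      congr 1
      rw [hT]
      push_cast
      rfl
    have h2 : s * T = (∑ v, (starRingEnd ℂ) (x v) * (A *ᵥ x) v).re := by
      rw [h1]
      norm_cast
    rw [h2]
    calc (∑ v, (starRingEnd ℂ) (x v) * (A *ᵥ x) v).re
        ≤ ‖∑ v, (starRingEnd ℂ) (x v) * (A *ᵥ x) v‖ := Complex.re_le_norm _
      _ ≤ ∑ v, ‖(starRingEnd ℂ) (x v) * (A *ᵥ x) v‖ := by
          exact norm_sum_le _ _
      _ ≤ ∑ v, ∑ u, y v * ‖A v u‖ * y u := by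
          apply Finset.sum_le_sum
          intro v _
          rw [norm_mul, Complex.norm_conj]
          have : (A *ᵥ x) v = ∑ u, A v u * x u := rfl
          rw [this]
          calc ‖x v‖ * ‖∑ u, A v u * x u‖
              ≤ ‖x v‖ * ∑ u, ‖A v u * x u‖ := by
                exact mul_le_mul_of_nonneg_left (norm_sum_le _ _) (norm_nonneg _)
            _ = ∑ u, y v * ‖A v u‖ * y u := by
                rw [Finset.mul_sum]
                apply Finset.sum_congr rfl
                intro u _
                rw [norm_mul]
                ring
  -- Bound each term by the indicator of edges inside U
  have step2 : ∑ v, ∑ u, y v * ‖A v u‖ * y u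
      ≤ ∑ v, ∑ u, (if v ∈ U ∧ u ∈ U ∧ G.Adj v u then y v * y u else 0) := by
    apply Finset.sum_le_sum; intro v _
    apply Finset.sum_le_sum; intro u _
    by_cases hadj : G.Adj v u
    · by_cases hvU : v ∈ U
      · by_cases huU : u ∈ U
        · rw [if_pos ⟨hvU, huU, hadj⟩, hEdge v u hadj, mul_one]
        · have h0 : y u = 0 := by simp [hy, hsupp u huU]
          rw [h0, mul_zero]
          split_ifs with h
          · positivity
          · exact le_rfl
      · have h0 : y v = 0 := by simp [hy, hsupp v hvU]
        rw [h0, zero_mul, zero_mul]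
        split_ifs with h
        · positivity
        · exact le_rfl
    · rw [hNonEdge v u hadj, norm_zero, mul_zero, zero_mul]
      split_ifs with h
      · positivity
      · exact le_rfl
  -- AM-GM and symmetrization
  have step3 : ∑ v, ∑ u, (if v ∈ U ∧ u ∈ U ∧ G.Adj v u then y v * y u else 0)
      ≤ ∑ v, ∑ u, (if v ∈ U ∧ u ∈ U ∧ G.Adj v u then (y v)^2 else 0) := by
    have hsym : ∑ v, ∑ u, (if v ∈ U ∧ u ∈ U ∧ G.Adj v u then (y u)^2 else 0)
        = ∑ v, ∑ u, (if v ∈ U ∧ u ∈ U ∧ G.Adj v u then (y v)^2 else 0) := by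
      rw [Finset.sum_comm]
      apply Finset.sum_congr rfl; intro v _
      apply Finset.sum_congr rfl; intro u _
      congr 1
      simp only [eq_iff_iff]
      constructor
      · rintro ⟨h1, h2, h3⟩; exact ⟨h2, h1, h3.symm⟩
      · rintro ⟨h1, h2, h3⟩; exact ⟨h2, h1, h3.symm⟩
    have hhalf : ∑ v, ∑ u, (if v ∈ U ∧ u ∈ U ∧ G.Adj v u then y v * y u else 0)
        ≤ (∑ v, ∑ u, (if v ∈ U ∧ u ∈ U ∧ G.Adj v u then (y v)^2 else 0)
          + ∑ v, ∑ u, (if v ∈ U ∧ u ∈ U ∧ G.Adj v u then (y u)^2 else 0)) / 2 := by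
      rw [le_div_iff₀ (by norm_num : (0:ℝ) < 2)]
      rw [← Finset.sum_add_distrib]
      rw [Finset.sum_mul]
      apply Finset.sum_le_sum; intro v _
      rw [← Finset.sum_add_distrib, Finset.sum_mul]
      apply Finset.sum_le_sum; intro u _
      by_cases hc : v ∈ U ∧ u ∈ U ∧ G.Adj v u
      · simp only [if_pos hc]
        nlinarith [sq_nonneg (y v - y u)]
      · simp [if_neg hc]
    rw [hsym] at hhalf
    linarith
  -- collapse inner sum to degree counts
  have step4 : ∑ v, ∑ u, (if v ∈ U ∧ u ∈ U ∧ G.Adj v u then (y v)^2 else 0)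
      = ∑ v ∈ U, ((U.filter (fun u => G.Adj v u)).card : ℝ) * (y v)^2 := by
    rw [← Finset.sum_filter_add_sum_filter_not Finset.univ (· ∈ U)]
    have h2 : ∑ v ∈ Finset.univ.filter (· ∉ U), ∑ u, (if v ∈ U ∧ u ∈ U ∧ G.Adj v u then (y v)^2 else 0) = 0 := by
      apply Finset.sum_eq_zero; intro v hv
      simp only [Finset.mem_filter] at hv
      apply Finset.sum_eq_zero; intro u _
      rw [if_neg (by tauto)]
    rw [h2, add_zero]
    have h3 : Finset.univ.filter (· ∈ U) = U := by
      ext v; simp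
    rw [h3]
    apply Finset.sum_congr rfl; intro v hv
    have : ∀ u, (if v ∈ U ∧ u ∈ U ∧ G.Adj v u then (y v)^2 else 0)
        = (if u ∈ U.filter (fun u => G.Adj v u) then (y v)^2 else 0) := by
      intro u
      congr 1
      simp only [Finset.mem_filter, eq_iff_iff]
      tauto
    simp_rw [this]
    rw [Finset.sum_ite_mem, Finset.univ_inter, Finset.sum_const, nsmul_eq_mul]
  -- strict bound using the contradiction hypothesis
  have step5 : ∑ v ∈ U, ((U.filter (fun u => G.Adj v u)).card : ℝ) * (y v)^2
      < ∑ v ∈ U, s * (y v)^2 := by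
    obtain ⟨v₀, hv₀⟩ := Function.ne_iff.mp hx0
    have hv₀U : v₀ ∈ U := by
      by_contra h
      exact hv₀ (hsupp v₀ h)
    apply Finset.sum_lt_sum
    · intro i hi
      apply mul_le_mul_of_nonneg_right (le_of_lt (hcon i hi)) (by positivity)
    · refine ⟨v₀, hv₀U, ?_⟩
      have : 0 < (y v₀)^2 := by
        have hxv₀ : x v₀ ≠ 0 := by simpa using hv₀
        have : 0 < y v₀ := norm_pos_iff.mpr hxv₀
        positivity
      exact mul_lt_mul_of_pos_right (hcon v₀ hv₀U) this
  have step6 : ∑ v ∈ U, s * (y v)^2 = s * T := by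
    rw [← Finset.mul_sum, hT]
    congr 1
    rw [← Finset.sum_filter_add_sum_filter_not Finset.univ (· ∈ U)]
    have h2 : ∑ v ∈ Finset.univ.filter (· ∉ U), (y v)^2 = 0 := by
      apply Finset.sum_eq_zero; intro v hv
      simp only [Finset.mem_filter] at hv
      simp [hy, hsupp v hv.2]
    have h3 : Finset.univ.filter (· ∈ U) = U := by ext v; simp
    rw [h2, add_zero, h3]
  linarith


theorem stmt9 (V : Type*) [Fintype V] (N d : ℕ) (hV : Fintype.card V = 2 * N)
    (G : SimpleGraph V) (hreg : G.IsRegularOfDegree d)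
    (A : Matrix V V ℂ) (hHerm : A.IsHermitian)
    (hEdge : ∀ u v, G.Adj u v → ‖A u v‖ = 1)
    (hNonEdge : ∀ u v, ¬ G.Adj u v → A u v = 0)
    (hsq : A ^ 2 = (d : ℂ) • 1)
    (U : Finset V) (hU : N < U.card) :
    ∃ u ∈ U, Real.sqrt d ≤ (U.filter (fun v => G.Adj u v)).card := by
  classical
  rcases Nat.eq_zero_or_pos d with hd0 | hdpos
  · obtain ⟨u, hu⟩ := Finset.card_pos.mp (lt_of_le_of_lt (Nat.zero_le N) hU)
    exact ⟨u, hu, by simp [hd0]⟩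
  set s : ℝ := Real.sqrt d with hs
  have hspos : 0 < s := Real.sqrt_pos.mpr (by positivity)
  set B := hHerm.eigenvectorBasis with hB
  set lam := hHerm.eigenvalues with hlam
  -- each eigenvalue squares to d
  have heigsq : ∀ i, (lam i) ^ 2 = (d : ℝ) := by
    intro i
    have h1 : A *ᵥ (A *ᵥ ⇑(B i)) = (d : ℂ) • ⇑(B i) := by
      rw [Matrix.mulVec_mulVec, ← pow_two, hsq, Matrix.smul_mulVec, Matrix.one_mulVec]
    have h2 : A *ᵥ (A *ᵥ ⇑(B i)) = ((lam i) ^ 2 : ℝ) • ⇑(B i) := by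
      rw [hHerm.mulVec_eigenvectorBasis, Matrix.mulVec_smul, hHerm.mulVec_eigenvectorBasis,
        smul_smul]
      norm_num [pow_two]
      rfl
    rw [h1] at h2
    have hne : (⇑(B i) : V → ℂ) ≠ 0 := by
      intro h
      apply B.orthonormal.ne_zero i
      apply PiLp.ext
      intro j
      have := congrFun h j
      simpa using this
    have h3 : ((d : ℂ) - (((lam i) ^ 2 : ℝ) : ℂ)) • (⇑(B i) : V → ℂ) = 0 := by
      rw [sub_smul]
      rw [show (((lam i) ^ 2 : ℝ) : ℂ) • (⇑(B i) : V → ℂ) = ((lam i) ^ 2 : ℝ) • (⇑(B i) : V → ℂ)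
        from (RCLike.real_smul_eq_coe_smul (K := ℂ) _ _).symm]
      rw [h2]
      simp
    rcases smul_eq_zero.mp h3 with hc | hc
    · have : ((d : ℝ) : ℂ) = (((lam i) ^ 2 : ℝ) : ℂ) := by
        have := sub_eq_zero.mp hc
        push_cast at this ⊢
        exact this
      exact_mod_cast this.symm
    · exact absurd hc hne
  -- eigenvalues are ± s
  have hpm : ∀ i, lam i = s ∨ lam i = -s := by
    intro i
    have hs2 : s ^ 2 = (d : ℝ) := Real.sq_sqrt (by positivity)
    have h : lam i ^ 2 = s ^ 2 := by rw [heigsq i, hs2]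
    exact (Commute.all (lam i) s).sq_eq_sq_iff_eq_or_eq_neg.mp h
  -- trace of A is zero
  have htr : Matrix.trace A = 0 := by
    apply Finset.sum_eq_zero
    intro v _
    exact hNonEdge v v (G.irrefl)
  -- trace equals sum of eigenvalues
  have htr2 : Matrix.trace A = ∑ i, ((lam i : ℝ) : ℂ) := by
    exact hHerm.trace_eq_sum_eigenvalues
  have hsum0 : ∑ i, lam i = 0 := by
    have : ((∑ i, lam i : ℝ) : ℂ) = 0 := by
      push_cast
      rw [← htr2, htr]
    exact_mod_cast this
  -- the eigenvalue s has multiplicity N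
  set S : Finset V := Finset.univ.filter (fun i => lam i = s) with hS
  set M : Finset V := Finset.univ.filter (fun i => ¬ lam i = s) with hM
  have hsplit : S.card + M.card = 2 * N := by
    rw [hS, hM, Finset.card_filter_add_card_filter_not, Finset.card_univ, hV]
  have hsumS : ∑ i ∈ S, lam i = (S.card : ℝ) * s := by
    rw [Finset.sum_congr rfl (fun i hi => (Finset.mem_filter.mp hi).2), Finset.sum_const,
      nsmul_eq_mul]
  have hsumM : ∑ i ∈ M, lam i = -((M.card : ℝ) * s) := by
    have : ∀ i ∈ M, lam i = -s := by
      intro i hi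
      rcases hpm i with h | h
      · exact absurd h (Finset.mem_filter.mp hi).2
      · exact h
    rw [Finset.sum_congr rfl this, Finset.sum_const, nsmul_eq_mul]
    ring
  have hcards : S.card = M.card := by
    have h := Finset.sum_filter_add_sum_filter_not Finset.univ (fun i => lam i = s) lam
    rw [← hS, ← hM] at h
    rw [hsumS, hsumM, hsum0] at h
    have : (S.card : ℝ) * s = (M.card : ℝ) * s := by linarith
    have := mul_right_cancel₀ (ne_of_gt hspos) this
    exact_mod_cast this
  have hSN : S.card = N := by omega
  -- the span of eigenvectors for eigenvalue s
  set Espan : Submodule ℂ (EuclideanSpace ℂ V) :=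
    Submodule.span ℂ (Set.range fun i : ↥S => B i) with hEspan
  set Wspan : Submodule ℂ (EuclideanSpace ℂ V) :=
    Submodule.span ℂ (Set.range fun u : ↥U => EuclideanSpace.single (u : V) (1 : ℂ)) with hWspan
  have hEindep : LinearIndependent ℂ (fun i : ↥S => B i) :=
    (B.orthonormal.comp _ Subtype.val_injective).linearIndependent
  have hWindep : LinearIndependent ℂ (fun u : ↥U => EuclideanSpace.single (u : V) (1 : ℂ)) :=
    ((EuclideanSpace.orthonormal_single (𝕜 := ℂ) (ι := V)).comp _
      Subtype.val_injective).linearIndependent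
  have hEfin : Module.finrank ℂ Espan = N := by
    rw [hEspan, finrank_span_eq_card hEindep, Fintype.card_coe, hSN]
  have hWfin : Module.finrank ℂ Wspan = U.card := by
    rw [hWspan, finrank_span_eq_card hWindep, Fintype.card_coe]
  have hsup : Module.finrank ℂ ↥(Espan ⊔ Wspan) ≤ 2 * N := by
    calc Module.finrank ℂ ↥(Espan ⊔ Wspan) ≤ Module.finrank ℂ (EuclideanSpace ℂ V) :=
          Submodule.finrank_le _
      _ = 2 * N := by rw [finrank_euclideanSpace, hV]
  have hinf : 0 < Module.finrank ℂ ↥(Espan ⊓ Wspan) := by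
    have h := Submodule.finrank_sup_add_finrank_inf_eq Espan Wspan
    rw [hEfin, hWfin] at h
    omega
  have : Nontrivial ↥(Espan ⊓ Wspan) := Module.finrank_pos_iff.mp hinf
  obtain ⟨x, hxne⟩ := exists_ne (0 : ↥(Espan ⊓ Wspan))
  have hxE : (x : EuclideanSpace ℂ V) ∈ Espan := x.2.1
  have hxW : (x : EuclideanSpace ℂ V) ∈ Wspan := x.2.2
  have hx0' : (x : EuclideanSpace ℂ V) ≠ 0 := by
    intro h
    exact hxne (Subtype.ext h)
  -- every element of Espan is an eigenvector for s
  have heigE : ∀ z ∈ Espan, A *ᵥ (⇑z : V → ℂ) = (s : ℂ) • (⇑z : V → ℂ) := by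
    intro z hz
    induction hz using Submodule.span_induction with
    | mem w hw =>
        obtain ⟨i, rfl⟩ := hw
        rw [hHerm.mulVec_eigenvectorBasis]
        have hli : lam (i : V) = s := (Finset.mem_filter.mp i.2).2
        rw [hlam] at hli
        rw [RCLike.real_smul_eq_coe_smul (K := ℂ), hli]
        rfl
    | zero => simp [WithLp.ofLp_zero]
    | add w₁ w₂ h₁ h₂ ih₁ ih₂ =>
        rw [WithLp.ofLp_add, Matrix.mulVec_add, ih₁, ih₂, smul_add]
    | smul c w hw ih =>
        rw [WithLp.ofLp_smul, Matrix.mulVec_smul, ih, smul_comm]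
  -- every element of Wspan is supported on U
  have hsuppW : ∀ z ∈ Wspan, ∀ v ∉ U, (⇑z : V → ℂ) v = 0 := by
    intro z hz
    induction hz using Submodule.span_induction with
    | mem w hw =>
        obtain ⟨u, rfl⟩ := hw
        intro v hv
        rw [EuclideanSpace.ofLp_single]
        apply Pi.single_eq_of_ne
        intro h
        rw [h] at hv
        exact hv u.2
    | zero => intro v _; simp [WithLp.ofLp_zero]
    | add w₁ w₂ h₁ h₂ ih₁ ih₂ =>
        intro v hv
        rw [WithLp.ofLp_add]
        simp [ih₁ v hv, ih₂ v hv]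
    | smul c w hw ih =>
        intro v hv
        rw [WithLp.ofLp_smul]
        simp [ih v hv]
  have hx0 : (⇑(x : EuclideanSpace ℂ V) : V → ℂ) ≠ 0 := by
    intro h
    apply hx0'
    apply PiLp.ext
    intro j
    have := congrFun h j
    simpa using this
  exact aux_deg V d G A hEdge hNonEdge U _ hx0 (hsuppW _ hxW) (heigE _ hxE)
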